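/- Let R be a commutative noetherian ring, let a be an ideal of R, let M be an R-module, and let N ⊆ M be a submodule which is Gorenstein injective as an R-module. Then the sequence 0 → Γ_a(N) → Γ_a(M) → Γ_a(M/N) → 0 is exact; that is, the natural map Γ_a(M) → Γ_a(M/N) induced by the quotient map M → M/N is surjective and has kernel Γ_a(N), so Γ_a(M/N) ≅ Γ_a(M)/Γ_a(N). -/

import Mathlib

open CategoryTheory

universe u

/-- The `a`-torsion submodule `Γ_a(M) = {x ∈ M | a^n x = 0 for some n}`. -/
def torsionGamma {R : Type u} [CommRing R] (a : Ideal R) (M : Type u)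
    [AddCommGroup M] [Module R M] : Submodule R M :=
  ⨆ n : ℕ, Submodule.torsionBySet R M ((a ^ n : Ideal R) : Set R)

/-- Data witnessing that `G` is Gorenstein injective: a ℤ-indexed exact complex of
injective modules, remaining exact after `Hom_R(E', -)` for every injective `E'`,
with `G ≅ ker(E_0 → E_{-1})`. -/
structure GorensteinInjData (R : Type u) [CommRing R] (G : Type u)
    [AddCommGroup G] [Module R G] where
  E : ℤ → Type u
  [acg : ∀ i, AddCommGroup (E i)]
  [mod : ∀ i, Module R (E i)]
  d : ∀ i : ℤ, E (i + 1) →ₗ[R] E i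
  inj : ∀ i, Module.Injective R (E i)
  exact : ∀ i : ℤ, LinearMap.range (d (i + 1)) = LinearMap.ker (d i)
  homExact : ∀ (E' : Type u) [AddCommGroup E'] [Module R E'], Module.Injective R E' →
      ∀ (i : ℤ) (g : E' →ₗ[R] E (i + 1)),
        (d i).comp g = 0 ↔ ∃ f : E' →ₗ[R] E (i + 1 + 1), (d (i + 1)).comp f = g
  equiv : G ≃ₗ[R] LinearMap.ker (d (-1))

/-- An `R`-module `G` is Gorenstein injective. -/
def IsGorensteinInjective (R : Type u) [CommRing R] (G : Type u)
    [AddCommGroup G] [Module R G] : Prop :=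
  Nonempty (GorensteinInjData R G)

/-- Data witnessing that `M` is Gorenstein flat. -/
structure GorensteinFlatData (R : Type u) [CommRing R] (M : Type u)
    [AddCommGroup M] [Module R M] where
  F : ℤ → Type u
  [acg : ∀ i, AddCommGroup (F i)]
  [mod : ∀ i, Module R (F i)]
  d : ∀ i : ℤ, F (i + 1) →ₗ[R] F i
  flat : ∀ i, Module.Flat R (F i)
  exact : ∀ i : ℤ, LinearMap.range (d (i + 1)) = LinearMap.ker (d i)
  tensorExact : ∀ (E' : Type u) [AddCommGroup E'] [Module R E'], Module.Injective R E' →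
      ∀ i : ℤ, LinearMap.range (LinearMap.lTensor E' (d (i + 1)))
        = LinearMap.ker (LinearMap.lTensor E' (d i))
  equiv : M ≃ₗ[R] LinearMap.ker (d (-1))

/-- An `R`-module `M` is Gorenstein flat. -/
def IsGorensteinFlat (R : Type u) [CommRing R] (M : Type u)
    [AddCommGroup M] [Module R M] : Prop :=
  Nonempty (GorensteinFlatData R M)

/-- `E` is an injective hull of `M`: `E` is injective and admits an injective
linear map from `M` with essential image. -/
def IsInjectiveHull (R : Type u) [CommRing R] (M : Type u) [AddCommGroup M] [Module R M]
    (E : Type u) [AddCommGroup E] [Module R E] : Prop :=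
  Module.Injective R E ∧ ∃ f : M →ₗ[R] E, Function.Injective f ∧
    ∀ N : Submodule R E, N ≠ ⊥ → N ⊓ LinearMap.range f ≠ ⊥

/-- `D` is a dualizing module for `R`: finitely generated, of finite injective dimension,
the homothety map `R → Hom_R(D,D)` is bijective, and `Ext^i_R(D,D) = 0` for `i ≥ 1`. -/
def IsDualizingModule (R : Type u) [CommRing R] (D : Type u)
    [AddCommGroup D] [Module R D] : Prop :=
  Module.Finite R D ∧
  (∃ n : ℕ, ∀ (M : Type u) (_ : AddCommGroup M) (_ : Module R M), ∀ i : ℕ, n < i →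
      Limits.IsZero (((Ext R (ModuleCat.{u} R) i).obj
        (Opposite.op (ModuleCat.of R M))).obj (ModuleCat.of R D))) ∧
  Function.Bijective (fun r : R => (r • (LinearMap.id : D →ₗ[R] D))) ∧
  (∀ i : ℕ, 0 < i →
    Limits.IsZero (((Ext R (ModuleCat.{u} R) i).obj
      (Opposite.op (ModuleCat.of R D))).obj (ModuleCat.of R D)))

/-- The height of a prime ideal, as the `Order.height` of the corresponding
point of the prime spectrum. -/
noncomputable def idealHeight {R : Type u} [CommRing R] (p : Ideal R) (hp : p.IsPrime) : ℕ∞ :=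
  Order.height (⟨p, hp⟩ : PrimeSpectrum R)

/-! ### Auxiliary lemmas for Statement 12 -/

section Auxiliary

variable {R : Type u} [CommRing R]

/-- Membership in `torsionGamma` unfolded. -/
theorem mem_torsionGamma_iff' {a : Ideal R} {M : Type u} [AddCommGroup M] [Module R M]
    {v : M} : v ∈ torsionGamma a M ↔ ∃ n : ℕ, ∀ r ∈ a ^ n, r • v = 0 := by
  have hdir : Directed (· ≤ ·)
      (fun n : ℕ => Submodule.torsionBySet R M ((a ^ n : Ideal R) : Set R)) := by
    apply Monotone.directed_le
    intro n m hnm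
    exact Submodule.torsionBySet_le_torsionBySet_of_subset
      (fun r hr => Ideal.pow_le_pow_right hnm hr)
  rw [torsionGamma, Submodule.mem_iSup_of_directed _ hdir]
  constructor
  · rintro ⟨n, hn⟩
    exact ⟨n, fun r hr => (Submodule.mem_torsionBySet_iff _ _).mp hn ⟨r, hr⟩⟩
  · rintro ⟨n, hn⟩
    exact ⟨n, (Submodule.mem_torsionBySet_iff _ _).mpr fun r => hn r.1 r.2⟩

/-- If `I ^ p ≤ K` and `J ^ q ≤ K` then `(I ⊔ J) ^ (p + q) ≤ K`. -/
theorem pow_sup_le_of_pow_le {I J : Ideal R} :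
    ∀ (c p q : ℕ) (K : Ideal R), p + q = c → I ^ p ≤ K → J ^ q ≤ K → (I ⊔ J) ^ c ≤ K := by
  intro c
  induction c with
  | zero =>
    intro p q K hpq hI _
    have hp : p = 0 := by omega
    subst hp
    rw [pow_zero] at hI
    rw [pow_zero]
    exact hI
  | succ c ih =>
    intro p q K hpq hI hJ
    rw [pow_succ, Ideal.mul_sup]
    have hcolon : ∀ (P : Ideal R) (p' : ℕ), P ^ (p' + 1) ≤ K →
        ∀ r ∈ P ^ p', r ∈ K.colon P := by
      intro P p' hP r hr
      rw [Submodule.mem_colon]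
      intro s hs
      have : r * s ∈ P ^ (p' + 1) := by
        rw [pow_succ]; exact Ideal.mul_mem_mul hr hs
      simpa [smul_eq_mul] using hP this
    have hmemK : ∀ (P : Ideal R), ∀ r ∈ K.colon P, ∀ s ∈ P, r * s ∈ K := by
      intro P r hr s hs
      simpa [smul_eq_mul] using Submodule.mem_colon.mp hr s hs
    apply sup_le
    · -- (I ⊔ J) ^ c * I ≤ K
      rcases Nat.eq_zero_or_pos p with hp | hp
      · subst hp
        have htop : (⊤ : Ideal R) ≤ K := by rwa [pow_zero, Ideal.one_eq_top] at hI
        exact le_trans le_top htop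
      · obtain ⟨p', rfl⟩ : ∃ p', p = p' + 1 := ⟨p - 1, by omega⟩
        have h1 : I ^ p' ≤ K.colon I := fun r hr => hcolon I p' hI r hr
        have h2 : J ^ q ≤ K.colon I := by
          intro r hr
          rw [Submodule.mem_colon]
          intro s hs
          simpa [smul_eq_mul] using Ideal.mul_mem_right s K (hJ hr)
        have h3 : (I ⊔ J) ^ c ≤ K.colon I := ih p' q (K.colon I) (by omega) h1 h2
        rw [Ideal.mul_le]
        intro r hr s hs
        exact hmemK I r (h3 hr) s hs
    · -- (I ⊔ J) ^ c * J ≤ K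
      rcases Nat.eq_zero_or_pos q with hq | hq
      · subst hq
        have htop : (⊤ : Ideal R) ≤ K := by rwa [pow_zero, Ideal.one_eq_top] at hJ
        exact le_trans le_top htop
      · obtain ⟨q', rfl⟩ : ∃ q', q = q' + 1 := ⟨q - 1, by omega⟩
        have h1 : J ^ q' ≤ K.colon J := fun r hr => hcolon J q' hJ r hr
        have h2 : I ^ p ≤ K.colon J := by
          intro r hr
          rw [Submodule.mem_colon]
          intro s hs
          simpa [smul_eq_mul] using Ideal.mul_mem_right s K (hI hr)
        have h3 : (I ⊔ J) ^ c ≤ K.colon J := ih p q' (K.colon J) (by omega) h2 h1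
        rw [Ideal.mul_le]
        intro r hr s hs
        exact hmemK J r (h3 hr) s hs

/-- Division lemma in an injective module over a noetherian ring: if `f` is killed by
`b ^ k`, then for every `x` and `t` there are `f'`, killed by a power of `b`, and `s`
with `x ^ (s + t) • f' = x ^ s • f`. -/
theorem injective_divide_lemma [IsNoetherianRing R] {E : Type u} [AddCommGroup E]
    [Module R E] (hE : Module.Injective R E) (b : Ideal R) (x : R) (t : ℕ) (f : E) (k : ℕ)
    (hf : ∀ r ∈ b ^ k, r • f = 0) :
    ∃ (f' : E) (s m : ℕ), x ^ (s + t) • f' = x ^ s • f ∧ ∀ r ∈ b ^ m, r • f' = 0 := by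
  classical
  -- stabilization of the annihilator chain of powers of `x`
  have hmono : Monotone (fun s : ℕ => LinearMap.ker (LinearMap.toSpanSingleton R R (x ^ s))) := by
    intro s s' hss' r hr
    rw [LinearMap.mem_ker, LinearMap.toSpanSingleton_apply, smul_eq_mul] at hr
    rw [LinearMap.mem_ker, LinearMap.toSpanSingleton_apply, smul_eq_mul]
    obtain ⟨e, rfl⟩ := Nat.exists_eq_add_of_le hss'
    rw [pow_add, ← mul_assoc, hr, zero_mul]
  obtain ⟨s₀, hs₀⟩ := monotone_stabilizes_iff_noetherian.mpr
    (inferInstance : IsNoetherian R R) ⟨_, hmono⟩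
  set c : R := x ^ (s₀ + t) with hc
  have hannc : ∀ r : R, r * c = 0 → r * x ^ s₀ = 0 := by
    intro r hr
    have heqker : LinearMap.ker (LinearMap.toSpanSingleton R R (x ^ s₀))
        = LinearMap.ker (LinearMap.toSpanSingleton R R (x ^ (s₀ + t))) :=
      hs₀ (s₀ + t) (Nat.le_add_right _ _)
    have h2 : r ∈ LinearMap.ker (LinearMap.toSpanSingleton R R (x ^ s₀)) := by
      rw [heqker, LinearMap.mem_ker, LinearMap.toSpanSingleton_apply, smul_eq_mul]
      exact hr
    rw [LinearMap.mem_ker, LinearMap.toSpanSingleton_apply, smul_eq_mul] at h2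
    exact h2
  set I : Ideal R := Ideal.span {c} with hI
  -- Artin–Rees
  obtain ⟨k₀, hAR⟩ := Ideal.exists_pow_inf_eq_pow_smul b (I : Submodule R R)
  set Nn : ℕ := k₀ + k with hNn
  have hARk : (b ^ Nn : Ideal R) ⊓ I ≤ b ^ k • I := by
    have h := hAR Nn (Nat.le_add_right _ _)
    have h1 : (b ^ Nn • ⊤ : Submodule R R) = (b ^ Nn : Ideal R) := by
      rw [smul_eq_mul, Ideal.mul_top]
    have h2 : Nn - k₀ = k := by omega
    rw [h1, h2] at h
    rw [h]
    exact smul_mono_right _ inf_le_right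
  -- key well-definedness property
  have key : ∀ r r' β β' : R, β ∈ b ^ Nn → β' ∈ b ^ Nn → r * c + β = r' * c + β' →
      r • (x ^ s₀ • f) = r' • (x ^ s₀ • f) := by
    intro r r' β β' hβ hβ' heq
    have hmem : (r - r') * c ∈ ((b ^ Nn : Ideal R) ⊓ I : Ideal R) := by
      constructor
      · have heq2 : (r - r') * c = β' - β := by
          have : r * c + β = r' * c + β' := heq
          ring_nf
          ring_nf at this
          linear_combination this
        rw [heq2]
        exact Submodule.sub_mem _ hβ' hβ
      · exact Ideal.mem_span_singleton'.mpr ⟨r - r', rfl⟩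
    obtain ⟨ρ, hρ, hρc⟩ := Submodule.mem_smul_span_singleton.mp (hARk hmem)
    rw [smul_eq_mul] at hρc
    have hann : (r - r' - ρ) * x ^ s₀ = 0 := by
      apply hannc
      rw [sub_mul, sub_mul, hρc]
      ring
    have hzero : (r - r') • (x ^ s₀ • f) = 0 := by
      have hs1 : (r - r') • (x ^ s₀ • f) = ((r - r') * x ^ s₀) • f := by
        rw [smul_smul]
      have hsplit : (r - r') * x ^ s₀ = ρ * x ^ s₀ + (r - r' - ρ) * x ^ s₀ := by ring
      rw [hs1, hsplit, hann, add_zero]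
      exact hf _ (Ideal.mul_mem_right _ _ hρ)
    have hsub := sub_smul r r' (x ^ s₀ • f)
    rw [hzero] at hsub
    exact sub_eq_zero.mp hsub.symm
  set J : Ideal R := I ⊔ b ^ Nn with hJdef
  have hdec : ∀ z ∈ J, ∃ rβ : R × R, rβ.2 ∈ b ^ Nn ∧ rβ.1 * c + rβ.2 = z := by
    intro z hz
    obtain ⟨y, hy, w, hw, hyw⟩ := Submodule.mem_sup.mp hz
    obtain ⟨r, hr⟩ := Ideal.mem_span_singleton'.mp hy
    exact ⟨(r, w), hw, by rw [hr, hyw]⟩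
  let pick : ↥J → R × R := fun z => (hdec z.1 z.2).choose
  have pick_spec : ∀ z : ↥J, (pick z).2 ∈ b ^ Nn ∧ (pick z).1 * c + (pick z).2 = z.1 :=
    fun z => (hdec z.1 z.2).choose_spec
  let φ : ↥J →ₗ[R] E :=
    { toFun := fun z => (pick z).1 • (x ^ s₀ • f)
      map_add' := by
        intro z z'
        have h1 := pick_spec (z + z')
        have h2 := pick_spec z
        have h3 := pick_spec z'
        have hadd : ((z + z' : ↥J) : R) = (z : R) + (z' : R) := rfl
        have heq : (pick (z + z')).1 * c + (pick (z + z')).2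
            = ((pick z).1 + (pick z').1) * c + ((pick z).2 + (pick z').2) := by
          linear_combination h1.2 + hadd - h2.2 - h3.2
        have hk := key _ _ _ _ h1.1 (Submodule.add_mem _ h2.1 h3.1) heq
        show (pick (z + z')).1 • (x ^ s₀ • f)
            = (pick z).1 • (x ^ s₀ • f) + (pick z').1 • (x ^ s₀ • f)
        rw [hk, add_smul]
      map_smul' := by
        intro m z
        have h1 := pick_spec (m • z)
        have h2 := pick_spec z
        have hsm : ((m • z : ↥J) : R) = m * (z : R) := rfl
        have heq : (pick (m • z)).1 * c + (pick (m • z)).2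
            = (m * (pick z).1) * c + m * (pick z).2 := by
          linear_combination h1.2 + hsm - m * h2.2
        have hk := key _ _ _ _ h1.1 (Ideal.mul_mem_left _ m h2.1) heq
        show (pick (m • z)).1 • (x ^ s₀ • f) = (RingHom.id R m) • ((pick z).1 • (x ^ s₀ • f))
        rw [hk]
        simp [smul_smul, mul_assoc] }
  obtain ⟨h, hh⟩ := hE.out J.subtype J.injective_subtype φ
  refine ⟨h 1, s₀, Nn, ?_, ?_⟩
  · have hcJ : c ∈ J := Submodule.mem_sup_left (Ideal.subset_span rfl)
    have h1 : h c = φ ⟨c, hcJ⟩ := hh ⟨c, hcJ⟩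
    have h2 : φ ⟨c, hcJ⟩ = x ^ s₀ • f := by
      show (pick ⟨c, hcJ⟩).1 • (x ^ s₀ • f) = x ^ s₀ • f
      have h3 := pick_spec ⟨c, hcJ⟩
      have heqc : (pick ⟨c, hcJ⟩).1 * c + (pick ⟨c, hcJ⟩).2 = 1 * c + 0 := by
        rw [h3.2, one_mul, add_zero]
      have hk := key _ _ _ _ h3.1 (Submodule.zero_mem _) heqc
      rw [hk, one_smul]
    calc x ^ (s₀ + t) • h 1 = h (x ^ (s₀ + t) • (1 : R)) := (map_smul h _ _).symm
      _ = h c := by rw [smul_eq_mul, mul_one]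
      _ = x ^ s₀ • f := by rw [h1, h2]
  · intro r hr
    have hrJ : r ∈ J := Submodule.mem_sup_right hr
    have h1 : r • h 1 = h r := by rw [← map_smul, smul_eq_mul, mul_one]
    rw [h1]
    have h2 : h r = φ ⟨r, hrJ⟩ := hh ⟨r, hrJ⟩
    rw [h2]
    have h3 := pick_spec ⟨r, hrJ⟩
    have heq : (pick ⟨r, hrJ⟩).1 * c + (pick ⟨r, hrJ⟩).2 = 0 * c + r := by
      rw [h3.2, zero_mul, zero_add]
    have := key _ _ _ _ h3.1 hr heq
    show (pick ⟨r, hrJ⟩).1 • (x ^ s₀ • f) = 0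
    rw [this, zero_smul]

/-- Main induction: in an exact complex of injective modules over a noetherian ring,
every torsion cycle is the boundary of a torsion element. -/
theorem torsion_cycle_is_torsion_boundary [IsNoetherianRing R]
    (T : ℤ → Type u) [∀ i, AddCommGroup (T i)] [∀ i, Module R (T i)]
    (d : ∀ i : ℤ, T (i + 1) →ₗ[R] T i)
    (inj : ∀ i, Module.Injective R (T i))
    (hex : ∀ i : ℤ, LinearMap.range (d (i + 1)) = LinearMap.ker (d i))
    (l : List R) :
    ∀ (i : ℤ) (v : T (i + 1)), d i v = 0 →
      (∃ n : ℕ, ∀ r ∈ (Ideal.span {y | y ∈ l} : Ideal R) ^ n, r • v = 0) →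
      ∃ u : T (i + 1 + 1), d (i + 1) u = v ∧
        ∃ m : ℕ, ∀ r ∈ (Ideal.span {y | y ∈ l} : Ideal R) ^ m, r • u = 0 := by
  induction l with
  | nil =>
    intro i v hv _
    have hvmem : v ∈ LinearMap.ker (d i) := hv
    rw [← hex i] at hvmem
    obtain ⟨u, hu⟩ := hvmem
    refine ⟨u, hu, 1, ?_⟩
    intro r hr
    have hsp : Ideal.span {y | y ∈ ([] : List R)} = (⊥ : Ideal R) := by
      have : {y | y ∈ ([] : List R)} = (∅ : Set R) := by
        ext y; simp
      rw [this, Ideal.span_empty]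
    rw [hsp, pow_one] at hr
    rw [Ideal.mem_bot.mp hr, zero_smul]
  | cons x l' ih =>
    intro i v hv hvt
    set B : Ideal R := Ideal.span {y | y ∈ l'} with hB
    have hspan : Ideal.span {y | y ∈ x :: l'} = Ideal.span {x} ⊔ B := by
      have : {y | y ∈ x :: l'} = insert x {y | y ∈ l'} := by
        ext y; simp
      rw [this, Ideal.span_insert]
    obtain ⟨n, hn⟩ := hvt
    -- v is B-torsion
    have hvB : ∃ nB : ℕ, ∀ r ∈ B ^ nB, r • v = 0 := by
      refine ⟨n, fun r hr => hn r ?_⟩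
      have hle : B ≤ Ideal.span {y | y ∈ x :: l'} := by
        apply Ideal.span_mono
        intro y hy
        simp only [Set.mem_setOf_eq] at hy ⊢
        exact List.mem_cons_of_mem x hy
      exact Ideal.pow_right_mono hle n hr
    -- x ^ n kills v
    have hxv : x ^ n • v = 0 := by
      apply hn
      have hx : x ∈ Ideal.span {y | y ∈ x :: l'} :=
        Ideal.subset_span (show x ∈ {y | y ∈ x :: l'} from by simp)
      exact Ideal.pow_mem_pow hx n
    -- boundary for v, with B-torsion witness
    obtain ⟨e, hde, pe, hpe⟩ := ih i v hv hvB
    -- z := x^n • e is a B-torsion cycle one level up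
    set z : T (i + 1 + 1) := x ^ n • e with hz
    have hdz : d (i + 1) z = 0 := by
      rw [hz, map_smul, hde, hxv]
    have hzt : ∃ nB : ℕ, ∀ r ∈ B ^ nB, r • z = 0 := by
      refine ⟨pe, fun r hr => ?_⟩
      rw [hz, smul_smul]
      exact hpe _ (Ideal.mul_mem_right _ _ hr)
    obtain ⟨f, hdf, pf, hpf⟩ := ih (i + 1) z hdz hzt
    -- divide f by x^n inside the injective module T (i+1+1+1)
    obtain ⟨f', s, m, hdiv, hft⟩ :=
      injective_divide_lemma (inj (i + 1 + 1 + 1)) B x n f pf hpf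
    set w : T (i + 1 + 1) := d (i + 1 + 1) f' with hw
    have hwker : d (i + 1) w = 0 := by
      have hmem : w ∈ LinearMap.ker (d (i + 1)) := by
        rw [← hex (i + 1)]
        exact ⟨f', rfl⟩
      exact hmem
    refine ⟨e - w, ?_, ?_⟩
    · rw [map_sub, hde, hwker, sub_zero]
    · -- torsion of u := e - w
      have hxu : x ^ (s + n) • (e - w) = 0 := by
        have h1 : x ^ (s + n) • w = x ^ (s + n) • e := by
          rw [hw, ← map_smul, hdiv, map_smul, hdf, hz, smul_smul, ← pow_add]
        rw [smul_sub, h1, sub_self]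
      set P : ℕ := max pe m with hP
      have hBu : ∀ r ∈ B ^ P, r • (e - w) = 0 := by
        intro r hr
        have hre : r • e = 0 := hpe r (Ideal.pow_le_pow_right (le_max_left _ _) hr)
        have hrw : r • w = 0 := by
          rw [hw, ← map_smul, hft r (Ideal.pow_le_pow_right (le_max_right _ _) hr), map_zero]
        rw [smul_sub, hre, hrw, sub_self]
      set K : Ideal R := LinearMap.ker (LinearMap.toSpanSingleton R (T (i + 1 + 1)) (e - w))
        with hK
      have hxK : Ideal.span {x} ^ (s + n) ≤ K := by
        rw [Ideal.span_singleton_pow, Ideal.span_le]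
        intro y hy
        rw [Set.mem_singleton_iff] at hy
        subst hy
        show x ^ (s + n) ∈ K
        rw [hK, LinearMap.mem_ker, LinearMap.toSpanSingleton_apply]
        exact hxu
      have hBK : B ^ P ≤ K := by
        intro r hr
        rw [hK, LinearMap.mem_ker, LinearMap.toSpanSingleton_apply]
        exact hBu r hr
      have htotal : (Ideal.span {x} ⊔ B) ^ ((s + n) + P) ≤ K :=
        pow_sup_le_of_pow_le ((s + n) + P) (s + n) P K rfl hxK hBK
      refine ⟨(s + n) + P, fun r hr => ?_⟩
      rw [hspan] at hr
      have := htotal hr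
      rw [hK, LinearMap.mem_ker, LinearMap.toSpanSingleton_apply] at this
      exact this

end Auxiliary

/-- if `N ⊆ M` is Gorenstein injective, then
`0 → Γ_a(N) → Γ_a(M) → Γ_a(M/N) → 0` is exact: the induced map
`Γ_a(M) → Γ_a(M/N)` is surjective and its kernel is `Γ_a(N)`. -/
theorem torsionGamma_quotient_exact
    {R : Type u} [CommRing R] [IsNoetherianRing R]
    (a : Ideal R) (M : Type u) [AddCommGroup M] [Module R M]
    (N : Submodule R M) (hN : IsGorensteinInjective R N) :
    Submodule.map N.mkQ (torsionGamma a M) = torsionGamma a (M ⧸ N) ∧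
    Submodule.map N.subtype (torsionGamma a N) = torsionGamma a M ⊓ N := by
  constructor
  · -- first conjunct
    apply le_antisymm
    · -- easy direction
      rintro _ ⟨w, hw, rfl⟩
      obtain ⟨n, hn⟩ := mem_torsionGamma_iff'.mp hw
      rw [mem_torsionGamma_iff']
      refine ⟨n, fun r hr => ?_⟩
      rw [Submodule.mkQ_apply, ← Submodule.Quotient.mk_smul, hn r hr,
        Submodule.Quotient.mk_zero]
    · -- hard direction: surjectivity on torsion parts
      intro zz hzz
      obtain ⟨D⟩ := hN
      letI : ∀ i, AddCommGroup (D.E i) := D.acg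
      letI : ∀ i, Module R (D.E i) := D.mod
      -- a finite generating list of `a`
      obtain ⟨S, hS⟩ := IsNoetherian.noetherian a
      set l : List R := S.toList with hl
      have ha : Ideal.span {y | y ∈ l} = a := by
        rw [← hS]
        congr 1
        ext y
        simp [hl]
      -- lift zz to M
      obtain ⟨x, rfl⟩ := Submodule.mkQ_surjective N zz
      obtain ⟨n, hn⟩ := mem_torsionGamma_iff'.mp hzz
      have hrxN : ∀ r ∈ a ^ n, r • x ∈ N := by
        intro r hr
        have h1 : N.mkQ (r • x) = 0 := by
          rw [map_smul, hn r hr]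
        rwa [Submodule.mkQ_apply, Submodule.Quotient.mk_eq_zero] at h1
      -- extend the embedding `N ≃ ker (d (-1)) ⊆ E 0` to `M`
      set Z : Submodule R (D.E (-1 + 1)) := LinearMap.ker (D.d (-1)) with hZ
      set ℓ : ↥N →ₗ[R] D.E (-1 + 1) := Z.subtype.comp D.equiv.toLinearMap with hℓ
      have hℓinj : Function.Injective ℓ := by
        rw [hℓ]
        exact Z.injective_subtype.comp (LinearEquiv.injective _)
      obtain ⟨L, hL⟩ := (D.inj (-1 + 1)).out N.subtype N.injective_subtype ℓ
      set e : D.E (-1 + 1) := L x with he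
      set v : D.E (-1) := D.d (-1) e with hv
      -- v is a torsion element
      have hvtors : ∀ r ∈ a ^ n, r • v = 0 := by
        intro r hr
        have h1 : r • e = ℓ ⟨r • x, hrxN r hr⟩ := by
          rw [he, ← map_smul]
          exact hL ⟨r • x, hrxN r hr⟩
        have h2 : D.d (-1) (ℓ ⟨r • x, hrxN r hr⟩) = 0 := by
          rw [hℓ]
          exact (D.equiv ⟨r • x, hrxN r hr⟩).2
        rw [hv, ← map_smul, h1, h2]
      -- v is a cycle
      have hvcyc : D.d (-2) v = 0 := by
        have hmem : (show D.E (-2 + 1) from v) ∈ LinearMap.ker (D.d (-2)) := by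
          rw [← D.exact (-2)]
          exact ⟨e, rfl⟩
        exact hmem
      -- main claim: v is the boundary of a torsion element
      have hcycle : ∃ u : D.E (-1 + 1), D.d (-1) u = v ∧ ∃ m : ℕ, ∀ r ∈ a ^ m, r • u = 0 := by
        obtain ⟨u₀, hu₀d, m, hu₀t⟩ :=
          torsion_cycle_is_torsion_boundary D.E D.d D.inj D.exact l (-2)
            (show D.E (-2 + 1) from v)
            (show D.d (-2) (show D.E (-2 + 1) from v) = 0 from hvcyc)
            ⟨n, by rw [ha]; exact hvtors⟩
        rw [ha] at hu₀t
        exact ⟨u₀, hu₀d, m, hu₀t⟩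
      obtain ⟨u₀, hu₀d', m, hu₀t⟩ := hcycle
      -- y := equiv⁻¹ (e - u₀) ∈ N
      have hyZ : e - u₀ ∈ Z := by
        rw [hZ, LinearMap.mem_ker, map_sub, hu₀d', hv, sub_self]
      set yN : ↥N := D.equiv.symm ⟨e - u₀, hyZ⟩ with hyN
      refine ⟨x - (yN : M), ?_, ?_⟩
      · -- x - yN is torsion in M
        show x - (yN : M) ∈ torsionGamma a M
        rw [mem_torsionGamma_iff']
        refine ⟨n + m, fun r hr => ?_⟩
        have hrn : r ∈ a ^ n := Ideal.pow_le_pow_right (Nat.le_add_right _ _) hr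
        have hrm : r ∈ a ^ m := Ideal.pow_le_pow_right (Nat.le_add_left _ _) hr
        have h1 : ℓ ⟨r • x, hrxN r hrn⟩ = r • e := by
          rw [← hL ⟨r • x, hrxN r hrn⟩]
          show L (r • x) = r • e
          rw [map_smul, he]
        have h2 : ℓ (r • yN) = r • e := by
          rw [hℓ]
          show (Z.subtype) (D.equiv (r • yN)) = r • e
          rw [map_smul, hyN, LinearEquiv.apply_symm_apply]
          show (r • (⟨e - u₀, hyZ⟩ : ↥Z) : D.E (-1 + 1)) = r • e
          show r • (e - u₀) = r • e
          rw [smul_sub, hu₀t r hrm, sub_zero]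
      -- hence r • x = r • yN
        have h3 : (⟨r • x, hrxN r hrn⟩ : ↥N) = r • yN := hℓinj (by rw [h1, h2])
        have h4 : r • x = r • (yN : M) := by
          have := congrArg (fun (w : ↥N) => (w : M)) h3
          exact this
        rw [smul_sub, h4, sub_self]
      · -- maps to mk x
        show Submodule.Quotient.mk (x - (yN : M)) = N.mkQ x
        have hy0 : (Submodule.Quotient.mk (yN : M) : M ⧸ N) = 0 :=
          (Submodule.Quotient.mk_eq_zero N).mpr yN.2
        rw [Submodule.Quotient.mk_sub, hy0, sub_zero, Submodule.mkQ_apply]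
  · -- second conjunct
    apply le_antisymm
    · rintro _ ⟨w, hw, rfl⟩
      obtain ⟨n, hn⟩ := mem_torsionGamma_iff'.mp hw
      rw [Submodule.mem_inf]
      constructor
      · rw [mem_torsionGamma_iff']
        refine ⟨n, fun r hr => ?_⟩
        have : N.subtype (r • w) = r • N.subtype w := map_smul _ _ _
        rw [← this, hn r hr, map_zero]
      · exact w.2
    · rintro z ⟨hz1, hz2⟩
      obtain ⟨n, hn⟩ := mem_torsionGamma_iff'.mp hz1
      refine ⟨⟨z, hz2⟩, ?_, rfl⟩
      show (⟨z, hz2⟩ : ↥N) ∈ torsionGamma a ↥N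
      rw [mem_torsionGamma_iff']
      refine ⟨n, fun r hr => ?_⟩
      apply Subtype.ext
      show r • z = (0 : M)
      exact hn r hr
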